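/- Let λ > 0, a > 0, c₀, c₁ ∈ ℝ, and let f : [0,a] → ℝ be continuous. Define u : [0,a] → ℝ by u(x) = cosh(√λ x)·c₀ + (sinh(√λ x)/√λ)·c₁ + ∫₀ˣ (sinh(√λ (x−ξ))/√λ)·f(ξ) dξ. Then for every x ∈ [0,a], e^{√λ (a−x)}·( u(x) + u'(x)/√λ ) = u(a) + u'(a)/√λ − ∫ₓᵃ (e^{√λ (a−ξ)}/√λ)·f(ξ) dξ. -/

import Mathlib

open MeasureTheory Set

/-- Backward identity expressing a Fourier mode at an interior point `x`
through its values at the endpoint `x = a`. -/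
theorem stmt_2 (lam a : ℝ) (hlam : 0 < lam) (ha : 0 < a) (c₀ c₁ : ℝ)
    (f : ℝ → ℝ) (hf : ContinuousOn f (Icc 0 a))
    (u u' : ℝ → ℝ)
    (hu : ∀ x, u x =
      Real.cosh (Real.sqrt lam * x) * c₀ +
      Real.sinh (Real.sqrt lam * x) / Real.sqrt lam * c₁ +
      ∫ ξ in (0:ℝ)..x, Real.sinh (Real.sqrt lam * (x - ξ)) / Real.sqrt lam * f ξ)
    (hu' : ∀ x ∈ Icc (0:ℝ) a, HasDerivWithinAt u (u' x) (Icc 0 a) x) :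
    ∀ x ∈ Icc (0:ℝ) a,
      Real.exp (Real.sqrt lam * (a - x)) * (u x + u' x / Real.sqrt lam) =
      u a + u' a / Real.sqrt lam -
        ∫ ξ in x..a, Real.exp (Real.sqrt lam * (a - ξ)) / Real.sqrt lam * f ξ := by
  have hs : 0 < Real.sqrt lam := Real.sqrt_pos.mpr hlam
  set s : ℝ := Real.sqrt lam with hs_def
  have hsne : s ≠ 0 := ne_of_gt hs
  set g : ℝ → ℝ := fun ξ => Real.cosh (s * ξ) * f ξ with hg_def
  set h : ℝ → ℝ := fun ξ => Real.sinh (s * ξ) * f ξ with hh_def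
  have hgc : ContinuousOn g (Icc 0 a) :=
    ((Real.continuous_cosh.comp (continuous_const.mul continuous_id)).continuousOn).mul hf
  have hhc : ContinuousOn h (Icc 0 a) :=
    ((Real.continuous_sinh.comp (continuous_const.mul continuous_id)).continuousOn).mul hf
  set A : ℝ → ℝ := fun y => ∫ ξ in (0:ℝ)..y, g ξ with hA_def
  set B : ℝ → ℝ := fun y => ∫ ξ in (0:ℝ)..y, h ξ with hB_def
  have hgi : ∀ y ∈ Icc (0:ℝ) a, IntervalIntegrable g volume 0 y := fun y hy =>
    (hgc.mono (by rw [uIcc_of_le hy.1]; exact Icc_subset_Icc le_rfl hy.2)).intervalIntegrable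
  have hhi : ∀ y ∈ Icc (0:ℝ) a, IntervalIntegrable h volume 0 y := fun y hy =>
    (hhc.mono (by rw [uIcc_of_le hy.1]; exact Icc_subset_Icc le_rfl hy.2)).intervalIntegrable
  -- rewrite u on Icc
  have hurew : ∀ y ∈ Icc (0:ℝ) a, u y =
      Real.cosh (s*y)*c₀ + Real.sinh (s*y)/s*c₁ +
        (Real.sinh (s*y)/s * A y - Real.cosh (s*y)/s * B y) := by
    intro y hy
    rw [hu y]
    congr 1
    rw [← intervalIntegral.integral_const_mul, ← intervalIntegral.integral_const_mul,
        ← intervalIntegral.integral_sub ((hgi y hy).const_mul _) ((hhi y hy).const_mul _)]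
    apply intervalIntegral.integral_congr
    intro ξ hξ
    simp only [hg_def, hh_def]
    rw [mul_sub, Real.sinh_sub]
    ring
  -- formula for u'
  have key : ∀ y ∈ Icc (0:ℝ) a, u' y =
      s * Real.sinh (s*y) * c₀ + Real.cosh (s*y) * c₁ +
      (Real.cosh (s*y) * A y - Real.sinh (s*y) * B y) := by
    intro y hy
    haveI : Fact (y ∈ Icc (0:ℝ) a) := ⟨hy⟩
    have hmg : StronglyMeasurableAtFilter g (nhdsWithin y (Icc 0 a)) volume :=
      hgc.stronglyMeasurableAtFilter_nhdsWithin measurableSet_Icc y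
    have hmh : StronglyMeasurableAtFilter h (nhdsWithin y (Icc 0 a)) volume :=
      hhc.stronglyMeasurableAtFilter_nhdsWithin measurableSet_Icc y
    have hAy : HasDerivWithinAt A (g y) (Icc 0 a) y :=
      intervalIntegral.integral_hasDerivWithinAt_right (hgi y hy) hmg (hgc y hy)
    have hBy : HasDerivWithinAt B (h y) (Icc 0 a) y :=
      intervalIntegral.integral_hasDerivWithinAt_right (hhi y hy) hmh (hhc y hy)
    have hsy : HasDerivAt (fun z : ℝ => s * z) s y := by
      simpa using (hasDerivAt_id y).const_mul s
    have hsh : HasDerivAt (fun z => Real.sinh (s*z)) (Real.cosh (s*y) * s) y :=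
      (Real.hasDerivAt_sinh (s*y)).comp y hsy
    have hch : HasDerivAt (fun z => Real.cosh (s*z)) (Real.sinh (s*y) * s) y :=
      (Real.hasDerivAt_cosh (s*y)).comp y hsy
    have hφ : HasDerivWithinAt (fun z => Real.cosh (s*z)*c₀ + Real.sinh (s*z)/s*c₁ +
        (Real.sinh (s*z)/s * A z - Real.cosh (s*z)/s * B z))
        (s * Real.sinh (s*y) * c₀ + Real.cosh (s*y) * c₁ +
          (Real.cosh (s*y) * A y - Real.sinh (s*y) * B y)) (Icc 0 a) y := by
      have H := ((hch.hasDerivWithinAt.mul_const c₀).add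
          ((hsh.hasDerivWithinAt.div_const s).mul_const c₁)).add
          (((hsh.hasDerivWithinAt.div_const s).mul hAy).sub
           ((hch.hasDerivWithinAt.div_const s).mul hBy))
      refine H.congr_deriv ?_
      simp only [hg_def, hh_def]
      field_simp
      ring
    have huD : HasDerivWithinAt u
        (s * Real.sinh (s*y) * c₀ + Real.cosh (s*y) * c₁ +
          (Real.cosh (s*y) * A y - Real.sinh (s*y) * B y)) (Icc 0 a) y :=
      hφ.congr (fun z hz => hurew z hz) (hurew y hy)
    have hud := (uniqueDiffOn_Icc ha) y hy
    have e1 : derivWithin u (Icc 0 a) y = u' y := (hu' y hy).derivWithin hud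
    have e2 := huD.derivWithin hud
    rw [← e1, e2]
  intro x hx
  have hax : a ∈ Icc (0:ℝ) a := ⟨le_of_lt ha, le_rfl⟩
  -- integral identity
  have hgix : IntervalIntegrable g volume x a :=
    (hgc.mono (by rw [uIcc_of_le hx.2]; exact Icc_subset_Icc hx.1 le_rfl)).intervalIntegrable
  have hhix : IntervalIntegrable h volume x a :=
    (hhc.mono (by rw [uIcc_of_le hx.2]; exact Icc_subset_Icc hx.1 le_rfl)).intervalIntegrable
  have hI : (∫ ξ in x..a, Real.exp (s*(a-ξ))/s * f ξ)
      = Real.exp (s*a)/s * ((A a - B a) - (A x - B x)) := by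
    have h1 : (∫ ξ in x..a, Real.exp (s*(a-ξ))/s * f ξ)
        = ∫ ξ in x..a, (Real.exp (s*a)/s * g ξ - Real.exp (s*a)/s * h ξ) := by
      apply intervalIntegral.integral_congr
      intro ξ hξ
      simp only [hg_def, hh_def]
      rw [mul_sub, Real.exp_sub, Real.cosh_eq, Real.sinh_eq, Real.exp_neg]
      have := Real.exp_ne_zero (s*ξ)
      field_simp
      ring
    rw [h1, intervalIntegral.integral_sub (hgix.const_mul _) (hhix.const_mul _),
        intervalIntegral.integral_const_mul, intervalIntegral.integral_const_mul]
    have h2 : (∫ ξ in x..a, g ξ) = A a - A x :=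
      (intervalIntegral.integral_interval_sub_left (hgi a hax) (hgi x hx)).symm
    have h3 : (∫ ξ in x..a, h ξ) = B a - B x :=
      (intervalIntegral.integral_interval_sub_left (hhi a hax) (hhi x hx)).symm
    rw [h2, h3]; ring
  rw [hurew x hx, key x hx, hurew a hax, key a hax, hI]
  -- pure algebra
  have e1 : Real.exp (s*(a-x)) = Real.exp (s*a) / Real.exp (s*x) := by
    rw [mul_sub, Real.exp_sub]
  have e2 : Real.sinh (s*x) = (Real.exp (s*x) - (Real.exp (s*x))⁻¹)/2 := by
    rw [Real.sinh_eq, Real.exp_neg]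
  have e3 : Real.cosh (s*x) = (Real.exp (s*x) + (Real.exp (s*x))⁻¹)/2 := by
    rw [Real.cosh_eq, Real.exp_neg]
  have e4 : Real.sinh (s*a) = (Real.exp (s*a) - (Real.exp (s*a))⁻¹)/2 := by
    rw [Real.sinh_eq, Real.exp_neg]
  have e5 : Real.cosh (s*a) = (Real.exp (s*a) + (Real.exp (s*a))⁻¹)/2 := by
    rw [Real.cosh_eq, Real.exp_neg]
  rw [e1, e2, e3, e4, e5]
  have hx0 := Real.exp_ne_zero (s*x)
  have ha0 := Real.exp_ne_zero (s*a)
  field_simp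
  ring
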